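/- Let k be an algebraically closed field and A = kQ/⟨P⟩ a gentle algebra with Q connected and not the Kronecker quiver. Then there exists a total order < on Γ≥1 such that for every f ∈ Aut^l(A) with f_α(α) ≠ 0 for all arrows α, and for all C, D ∈ Γ≥1, C < D implies f_C(D) = 0. -/

import Mathlib

open scoped Classical

namespace GentlePaper

/-- A finite quiver. -/
structure Quiv where
  V : Type
  A : Type
  [fintV : Fintype V]
  [fintA : Fintype A]
  [decV : DecidableEq V]
  [decA : DecidableEq A]
  src : A → V
  tgt : A → V

attribute [instance] Quiv.fintV Quiv.fintA Quiv.decV Quiv.decA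

/-- A set of relations of length two: `P a b` means that the length-two path
"first `a`, then `b`" (i.e. the composition `b∘a`) belongs to `P`. -/
abbrev Rels (Q : Quiv) := Q.A → Q.A → Prop

/-- Connectedness of a quiver (as an undirected graph). -/
def Connected (Q : Quiv) : Prop :=
  Nonempty Q.V ∧ ∀ v w : Q.V, Relation.ReflTransGen
    (fun x y => ∃ a : Q.A, (Q.src a = x ∧ Q.tgt a = y) ∨ (Q.src a = y ∧ Q.tgt a = x)) v w

/-- The number of cycles `c(Q) = #Q₁ - #Q₀ + 1` of a connected quiver. -/
def cQ (Q : Quiv) : ℕ := Fintype.card Q.A + 1 - Fintype.card Q.V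

/-- The conditions for `kQ/⟨P⟩` to be a gentle algebra. -/
structure IsGentle (Q : Quiv) (P : Rels Q) : Prop where
  rel_comp : ∀ a b : Q.A, P a b → Q.tgt a = Q.src b
  src_le_two : ∀ v : Q.V, Fintype.card {a : Q.A // Q.src a = v} ≤ 2
  tgt_le_two : ∀ v : Q.V, Fintype.card {a : Q.A // Q.tgt a = v} ≤ 2
  nonrel_succ_unique : ∀ b c c' : Q.A, Q.src c = Q.tgt b → Q.src c' = Q.tgt b →
    ¬ P b c → ¬ P b c' → c = c'
  nonrel_pred_unique : ∀ b a a' : Q.A, Q.tgt a = Q.src b → Q.tgt a' = Q.src b →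
    ¬ P a b → ¬ P a' b → a = a'
  rel_succ_unique : ∀ b c c' : Q.A, P b c → P b c' → c = c'
  rel_pred_unique : ∀ b a a' : Q.A, P a b → P a' b → a = a'
  bounded : ∃ N : ℕ, ∀ l : List Q.A,
    List.Chain' (fun a b => Q.tgt a = Q.src b) l → l.length = N →
      ∃ (l₁ : List Q.A) (a b : Q.A) (l₂ : List Q.A), l = l₁ ++ a :: b :: l₂ ∧ P a b

/-- Paths of a quiver: either a trivial path at a vertex, or a nonempty list of
composable arrows, recorded in traversal order. -/
def Pth (Q : Quiv) := Q.V ⊕ List Q.A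

/-- Two arrows are composable (first `a` then `b`) and do not form a relation. -/
def permPair (Q : Quiv) (P : Rels Q) (a b : Q.A) : Prop := Q.tgt a = Q.src b ∧ ¬ P a b

/-- Two arrows are composable (first `a` then `b`) and form a relation. -/
def forbPair (Q : Quiv) (P : Rels Q) (a b : Q.A) : Prop := Q.tgt a = Q.src b ∧ P a b

/-- "Nonzero path" in `kQ/⟨P⟩`: a trivial path, or a nonempty composable sequence of
arrows having no length-two subpath in `P`.  For nonempty lists this is exactly the
notion of a permitted path. -/
def pthOk (Q : Quiv) (P : Rels Q) : Pth Q → Prop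
  | Sum.inl _ => True
  | Sum.inr l => l ≠ [] ∧ List.Chain' (permPair Q P) l

/-- Start vertex of a path/thread. -/
def thStart (Q : Quiv) : Pth Q → Option Q.V
  | Sum.inl v => some v
  | Sum.inr l => l.head?.map Q.src

/-- End vertex of a path/thread. -/
def thEnd (Q : Quiv) : Pth Q → Option Q.V
  | Sum.inl v => some v
  | Sum.inr l => l.getLast?.map Q.tgt

/-- Length of a path/thread. -/
def thLen (Q : Quiv) : Pth Q → ℕ
  | Sum.inl _ => 0
  | Sum.inr l => l.length

/-- Permitted threads (trivial and non-trivial ones). -/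
def IsPermThread (Q : Quiv) (P : Rels Q) : Pth Q → Prop
  | Sum.inl v => Fintype.card {a : Q.A // Q.src a = v} ≤ 1 ∧
      Fintype.card {a : Q.A // Q.tgt a = v} ≤ 1 ∧
      ∀ b c : Q.A, Q.tgt b = v → Q.src c = v → ¬ P b c
  | Sum.inr l => l ≠ [] ∧ List.Chain' (permPair Q P) l ∧
      (∀ b : Q.A, ¬ List.Chain' (permPair Q P) (l ++ [b])) ∧
      (∀ b : Q.A, ¬ List.Chain' (permPair Q P) (b :: l))

/-- Forbidden threads (trivial and non-trivial ones). -/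
def IsForbThread (Q : Quiv) (P : Rels Q) : Pth Q → Prop
  | Sum.inl v => Fintype.card {a : Q.A // Q.src a = v} ≤ 1 ∧
      Fintype.card {a : Q.A // Q.tgt a = v} ≤ 1 ∧
      ∀ b c : Q.A, Q.tgt b = v → Q.src c = v → P b c
  | Sum.inr l => l ≠ [] ∧ l.Nodup ∧ List.Chain' (forbPair Q P) l ∧
      (∀ b : Q.A, ¬ ((l ++ [b]).Nodup ∧ List.Chain' (forbPair Q P) (l ++ [b]))) ∧
      (∀ b : Q.A, ¬ ((b :: l).Nodup ∧ List.Chain' (forbPair Q P) (b :: l)))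

/-- The axioms for the sign functions `σ, ε : Q₁ → {1,-1}`. -/
structure SgnOk (Q : Quiv) (P : Rels Q) (sg ep : Q.A → ℤ) : Prop where
  sg_pm : ∀ a : Q.A, sg a = 1 ∨ sg a = -1
  ep_pm : ∀ a : Q.A, ep a = 1 ∨ ep a = -1
  sg_opp : ∀ a b : Q.A, a ≠ b → Q.src a = Q.src b → sg a = - sg b
  ep_opp : ∀ a b : Q.A, a ≠ b → Q.tgt a = Q.tgt b → ep a = - ep b
  comp : ∀ a b : Q.A, Q.tgt a = Q.src b → ¬ P a b → sg b = - ep a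

/-- `σ` extended to permitted threads. -/
noncomputable def permSg (Q : Quiv) (sg ep : Q.A → ℤ) : Pth Q → Option ℤ
  | Sum.inl v =>
      if h : ∃ γ : Q.A, Q.src γ = v then some (-(sg h.choose))
      else if h2 : ∃ β : Q.A, Q.tgt β = v then some (ep h2.choose)
      else none
  | Sum.inr l => l.head?.map sg

/-- `ε` extended to permitted threads. -/
noncomputable def permEp (Q : Quiv) (sg ep : Q.A → ℤ) : Pth Q → Option ℤ
  | Sum.inl v => (permSg Q sg ep (Sum.inl v)).map (fun x => -x)
  | Sum.inr l => l.getLast?.map ep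

/-- `σ` extended to forbidden threads. -/
noncomputable def forbSg (Q : Quiv) (sg ep : Q.A → ℤ) : Pth Q → Option ℤ
  | Sum.inl v =>
      if h : ∃ γ : Q.A, Q.src γ = v then some (-(sg h.choose))
      else if h2 : ∃ β : Q.A, Q.tgt β = v then some (-(ep h2.choose))
      else none
  | Sum.inr l => l.head?.map sg

/-- `ε` extended to forbidden threads. -/
noncomputable def forbEp (Q : Quiv) (sg ep : Q.A → ℤ) : Pth Q → Option ℤ
  | Sum.inl v => forbSg Q sg ep (Sum.inl v)
  | Sum.inr l => l.getLast?.map ep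

/-- One step of the algorithm computing `φ_A`: from the permitted thread `H` one
passes backwards through the forbidden thread `Π` (of length `len`) ending at the
end of `H` with `ε(Π) = -ε(H)`, arriving at the permitted thread `H'` starting at
the start of `Π` with `σ(H') = -σ(Π)`. -/
noncomputable def AlgStep (Q : Quiv) (P : Rels Q) (sg ep : Q.A → ℤ)
    (H H' : Pth Q) (len : ℕ) : Prop :=
  IsPermThread Q P H ∧ IsPermThread Q P H' ∧
  ∃ Pi : Pth Q, IsForbThread Q P Pi ∧
    thEnd Q Pi = thEnd Q H ∧
    forbEp Q sg ep Pi = (permEp Q sg ep H).map (fun x => -x) ∧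
    thStart Q H' = thStart Q Pi ∧
    permSg Q sg ep H' = (forbSg Q sg ep Pi).map (fun x => -x) ∧
    len = thLen Q Pi

/-- The permitted thread `H` returns to itself for the first time after exactly `n`
steps of the algorithm, and the total length of the forbidden threads used is `m`. -/
noncomputable def CycleData (Q : Quiv) (P : Rels Q) (sg ep : Q.A → ℤ)
    (H : Pth Q) (n m : ℕ) : Prop :=
  0 < n ∧ IsPermThread Q P H ∧
  ∃ (f : ℕ → Pth Q) (g : ℕ → ℕ),
    f 0 = H ∧ f n = H ∧
    (∀ i, i < n → AlgStep Q P sg ep (f i) (f (i + 1)) (g i)) ∧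
    (∀ i, 0 < i → i < n → f i ≠ H) ∧
    m = ∑ i ∈ Finset.range n, g i

/-- A directed cycle in which each pair of (cyclically) consecutive arrows is a
relation; recorded as a nonempty duplicate-free list of arrows. -/
def IsRelCycle (Q : Quiv) (P : Rels Q) (l : List Q.A) : Prop :=
  l ≠ [] ∧ l.Nodup ∧ List.Chain' (forbPair Q P) l ∧
  ∃ a b : Q.A, l.head? = some a ∧ l.getLast? = some b ∧ Q.tgt b = Q.src a ∧ P b a

/-- The derived invariant `φ_A : ℕ² → ℕ` of a gentle algebra `A = kQ/⟨P⟩`.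
For `n ≥ 1`, `φ_A(n,m)` counts the cycles of the algorithm which use `n` permitted
threads and forbidden threads of total length `m` (each such cycle consists of `n`
permitted threads, whence the division); `φ_A(0,m)` counts the directed cycles of
length `m` in which any two consecutive arrows form a relation (counted up to
rotation: such a cycle of length `m` has exactly `m` rotations). -/
noncomputable def phi (Q : Quiv) (P : Rels Q) (sg ep : Q.A → ℤ) : ℕ × ℕ → ℕ :=
  fun p => match p with
  | (0, m) => Nat.card {l : List Q.A // IsRelCycle Q P l ∧ l.length = m} / m
  | (n + 1, m) => Nat.card {H : Pth Q // CycleData Q P sg ep H (n + 1) m} / (n + 1)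

/-- The Kronecker quiver: two vertices and two parallel arrows. -/
def IsKronecker (Q : Quiv) : Prop :=
  ∃ (v w : Q.V) (a b : Q.A), v ≠ w ∧ a ≠ b ∧ (∀ u : Q.V, u = v ∨ u = w) ∧
    (∀ c : Q.A, c = a ∨ c = b) ∧ (∀ c : Q.A, Q.src c = v ∧ Q.tgt c = w)

end GentlePaper

namespace GentlePaper

/-- Composition of paths: `pcomp Q C D` is the path `C∘D` ("first `D`, then `C`"),
or `none` if the paths are not composable. -/
def pcomp (Q : Quiv) : Pth Q → Pth Q → Option (Pth Q)
  | Sum.inl v, Sum.inl w => if v = w then some (Sum.inl v) else none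
  | Sum.inl v, Sum.inr l => if thEnd Q (Sum.inr l) = some v then some (Sum.inr l) else none
  | Sum.inr l, Sum.inl v => if thStart Q (Sum.inr l) = some v then some (Sum.inr l) else none
  | Sum.inr l, Sum.inr l' => some (Sum.inr (l' ++ l))

/-- The index set `Γ` of the canonical basis of `kQ/⟨P⟩`: residue classes of the
paths of `Q` not lying in `⟨P⟩`. -/
def Gam (Q : Quiv) (P : Rels Q) := {p : Pth Q // pthOk Q P p}

/-- The trivial path `1_v` as an element of `Γ`. -/
def trivGam (Q : Quiv) (P : Rels Q) (v : Q.V) : Gam Q P := ⟨Sum.inl v, trivial⟩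

/-- An arrow `a` as an element of `Γ`. -/
def arrGam (Q : Quiv) (P : Rels Q) (a : Q.A) : Gam Q P :=
  ⟨Sum.inr [a], ⟨List.cons_ne_nil a [], List.isChain_singleton a⟩⟩

/-- The basis vector attached to a path, or `0` if the path lies in `⟨P⟩`. -/
noncomputable def basImg {k : Type} [Field k] {Q : Quiv} {P : Rels Q} {A : Type}
    [Ring A] [Algebra k A] (bas : Module.Basis (Gam Q P) k A) (p : Pth Q) : A :=
  if h : pthOk Q P p then bas ⟨p, h⟩ else 0

/-- A presentation of the `k`-algebra `A` as the path algebra `kQ/⟨P⟩`: a `k`-basis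
indexed by the residue classes of nonzero paths, multiplying as paths do, with the
identity being the sum of the trivial paths.  An algebra admitting such a
presentation is precisely one isomorphic to `kQ/⟨P⟩`. -/
structure PathAlgPresentation (k : Type) [Field k] (Q : Quiv) (P : Rels Q)
    (A : Type) [Ring A] [Algebra k A] where
  bas : Module.Basis (Gam Q P) k A
  mul_bas : ∀ C D : Gam Q P,
    bas C * bas D = (pcomp Q C.1 D.1).elim 0 (basImg bas)
  one_bas : (1 : A) = ∑ v : Q.V, bas (trivGam Q P v)

namespace PathAlgPresentation

variable {k : Type} [Field k] {Q : Quiv} {P : Rels Q} {A : Type} [Ring A] [Algebra k A]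

/-- The idempotent `1_v` of the presented algebra. -/
noncomputable def e (pp : PathAlgPresentation k Q P A) (v : Q.V) : A :=
  pp.bas (trivGam Q P v)

/-- The coefficient `f_C(D)` of the basis element `C` in the expansion of `f(D)`. -/
noncomputable def coeff (pp : PathAlgPresentation k Q P A)
    (f : A ≃ₐ[k] A) (C D : Gam Q P) : k :=
  pp.bas.repr (f (pp.bas D)) C

/-- Membership in `Aut^l(A)`: algebra automorphisms fixing all the `1_v`. -/
def MemAutL (pp : PathAlgPresentation k Q P A) (f : A ≃ₐ[k] A) : Prop :=
  ∀ v : Q.V, f (pp.e v) = pp.e v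

/-- Membership in `Aut₊^l(A) = {f ∈ Aut^l(A) | f_α(α) ≠ 0 for all arrows α}`. -/
noncomputable def MemAutStar (pp : PathAlgPresentation k Q P A) (f : A ≃ₐ[k] A) : Prop :=
  pp.MemAutL f ∧ ∀ a : Q.A, pp.coeff f (arrGam Q P a) (arrGam Q P a) ≠ 0

/-- Membership in `S(Q₁)`: automorphisms in `Aut₊^l(A)` rescaling every arrow. -/
noncomputable def MemSQ1 (pp : PathAlgPresentation k Q P A) (f : A ≃ₐ[k] A) : Prop :=
  pp.MemAutStar f ∧ ∀ a : Q.A, ∃ c : kˣ,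
    f (pp.bas (arrGam Q P a)) = (c : k) • pp.bas (arrGam Q P a)

/-- Membership in `N(A) = {f ∈ Aut₊^l(A) | f_α(α) = 1 for all arrows α}`. -/
noncomputable def MemNA (pp : PathAlgPresentation k Q P A) (f : A ≃ₐ[k] A) : Prop :=
  pp.MemAutStar f ∧ ∀ a : Q.A, pp.coeff f (arrGam Q P a) (arrGam Q P a) = 1

/-- Membership of an element in the subalgebra `⊕_{v ∈ Q₀} 1_v A 1_v`. -/
noncomputable def IsDiag (pp : PathAlgPresentation k Q P A) (x : A) : Prop :=
  (∑ v : Q.V, pp.e v * x * pp.e v) = x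

/-- Membership in `Inn^l(A)`: inner automorphisms `ι_x` with `x` an invertible
element of `⊕_v 1_v A 1_v`. -/
noncomputable def MemInnL (pp : PathAlgPresentation k Q P A) (f : A ≃ₐ[k] A) : Prop :=
  ∃ x : Aˣ, pp.IsDiag (x : A) ∧ ∀ a : A, f a = (↑x⁻¹ : A) * a * (x : A)

/-- Membership in `Inn_S^l(A)`: inner automorphisms `ι_s`, `s = Σ_v c_v 1_v`, `c_v ∈ k*`. -/
noncomputable def MemInnS (pp : PathAlgPresentation k Q P A) (f : A ≃ₐ[k] A) : Prop :=
  ∃ (c : Q.V → kˣ) (x : Aˣ), ((x : A) = ∑ v : Q.V, (c v : k) • pp.e v) ∧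
    ∀ a : A, f a = (↑x⁻¹ : A) * a * (x : A)

/-- Membership in `Inn_N^l(A)`: inner automorphisms `ι_u`, `u = Σ_v (1_v + n_v)`,
with `n_v ∈ 1_v A 1_v` nilpotent. -/
noncomputable def MemInnN (pp : PathAlgPresentation k Q P A) (f : A ≃ₐ[k] A) : Prop :=
  ∃ (x : Aˣ) (n : Q.V → A), (∀ v : Q.V, IsNilpotent (n v)) ∧
    (∀ v : Q.V, pp.e v * n v * pp.e v = n v) ∧
    ((x : A) = ∑ v : Q.V, (pp.e v + n v)) ∧
    ∀ a : A, f a = (↑x⁻¹ : A) * a * (x : A)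

end PathAlgPresentation

end GentlePaper


namespace GentlePaper

open PathAlgPresentation


section CORE

variable {k : Type} [Field k] {Q : Quiv} {P : Rels Q} {A : Type} [Ring A] [Algebra k A]

lemma gam_eq {p q : Pth Q} (hp : pthOk Q P p) (hq : pthOk Q P q) (h : p = q) :
    (⟨p, hp⟩ : Gam Q P) = ⟨q, hq⟩ := Subtype.ext h

lemma pthOk_len {l : List Q.A} (h : pthOk Q P (Sum.inr l)) : 1 ≤ l.length := by
  rcases h with ⟨h1, -⟩
  cases l with
  | nil => simp at h1
  | cons a l => simp

lemma thLen_eq_zero {p : Pth Q} (hp : pthOk Q P p) (h : thLen Q p = 0) : ∃ v, p = Sum.inl v := by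
  cases p with
  | inl v => exact ⟨v, rfl⟩
  | inr l => exfalso; have := pthOk_len hp; simp only [thLen] at h; omega

lemma pcomp_len {p q r : Pth Q} (h : pcomp Q p q = some r) :
    thLen Q r = thLen Q p + thLen Q q := by
  cases p with
  | inl v =>
    cases q with
    | inl w =>
      simp only [pcomp] at h
      split_ifs at h
      cases h; simp [thLen]
    | inr m =>
      simp only [pcomp] at h
      split_ifs at h
      cases h; simp [thLen]
  | inr l =>
    cases q with
    | inl w =>
      simp only [pcomp] at h
      split_ifs at h
      cases h; simp [thLen]
    | inr m =>
      simp only [pcomp] at h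
      cases h; simp [thLen]; omega

lemma pcomp_inl_right {p : Pth Q} {v : Q.V} {r : Pth Q} (h : pcomp Q p (Sum.inl v) = some r) :
    r = p ∧ thStart Q p = some v := by
  cases p with
  | inl u =>
    simp only [pcomp] at h
    split_ifs at h with hc
    cases h; subst hc; exact ⟨rfl, rfl⟩
  | inr l =>
    simp only [pcomp] at h
    split_ifs at h with hc
    cases h; exact ⟨rfl, hc⟩

lemma pcomp_inl_left {q : Pth Q} {w : Q.V} {r : Pth Q} (h : pcomp Q (Sum.inl w) q = some r) :
    r = q ∧ thEnd Q q = some w := by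
  cases q with
  | inl u =>
    simp only [pcomp] at h
    split_ifs at h with hc
    cases h; subst hc; exact ⟨rfl, rfl⟩
  | inr l =>
    simp only [pcomp] at h
    split_ifs at h with hc
    cases h; exact ⟨rfl, hc⟩

lemma repr_bas_mul_bas (pp : PathAlgPresentation k Q P A) (C D E : Gam Q P) :
    pp.bas.repr (pp.bas C * pp.bas D) E = if pcomp Q C.1 D.1 = some E.1 then 1 else 0 := by
  rw [pp.mul_bas]
  rcases h : pcomp Q C.1 D.1 with _ | p
  · simp
  · simp only [Option.elim, basImg]
    by_cases hok : pthOk Q P p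
    · rw [dif_pos hok, pp.bas.repr_self ⟨p, hok⟩]
      refine (Finsupp.single_apply (a := (⟨p, hok⟩ : Gam Q P)) (a' := E) (b := (1 : k))).trans ?_
      by_cases h2 : (⟨p, hok⟩ : Gam Q P) = E
      · rw [if_pos h2, if_pos (by rw [← h2])]
      · rw [if_neg h2, if_neg (fun hc => h2 (Subtype.ext (Option.some.inj hc)))]
    · rw [dif_neg hok, map_zero, Finsupp.coe_zero, Pi.zero_apply,
        if_neg (fun hc => hok (by rw [Option.some.inj hc]; exact E.2))]

lemma repr_mul_left (pp : PathAlgPresentation k Q P A) (x y : A) (E : Gam Q P) :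
    pp.bas.repr (x * y) E = (pp.bas.repr x).sum fun C c => c * pp.bas.repr (pp.bas C * y) E := by
  conv_lhs => rw [← pp.bas.linearCombination_repr x, Finsupp.linearCombination_apply]
  rw [Finsupp.sum, Finset.sum_mul, map_sum, Finset.sum_apply', Finsupp.sum]
  refine Finset.sum_congr rfl fun C hC => ?_
  rw [smul_mul_assoc, map_smul]
  simp

lemma repr_mul_right (pp : PathAlgPresentation k Q P A) (x y : A) (E : Gam Q P) :
    pp.bas.repr (x * y) E = (pp.bas.repr y).sum fun D d => d * pp.bas.repr (x * pp.bas D) E := by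
  conv_lhs => rw [← pp.bas.linearCombination_repr y, Finsupp.linearCombination_apply]
  rw [Finsupp.sum, Finset.mul_sum, map_sum, Finset.sum_apply', Finsupp.sum]
  refine Finset.sum_congr rfl fun D hD => ?_
  rw [mul_smul_comm, map_smul]
  simp

lemma repr_mul (pp : PathAlgPresentation k Q P A) (x y : A) (E : Gam Q P) :
    pp.bas.repr (x * y) E = (pp.bas.repr x).sum fun C c => (pp.bas.repr y).sum fun D d =>
      c * (d * (if pcomp Q C.1 D.1 = some E.1 then 1 else 0)) := by
  rw [repr_mul_left]
  refine Finsupp.sum_congr fun C _ => ?_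
  rw [repr_mul_right, Finsupp.mul_sum]
  refine Finsupp.sum_congr fun D _ => ?_
  rw [repr_bas_mul_bas]

end CORE
section LOW
variable {k : Type} [Field k] {Q : Quiv} {P : Rels Q} {A : Type} [Ring A] [Algebra k A]

/-- All coefficients at basis paths of length `< n` vanish. -/
def lowZero (pp : PathAlgPresentation k Q P A) (n : ℕ) (x : A) : Prop :=
  ∀ C : Gam Q P, thLen Q C.1 < n → pp.bas.repr x C = 0

lemma lowZero_mono {pp : PathAlgPresentation k Q P A} {m n : ℕ} {x : A}
    (h : lowZero pp n x) (hmn : m ≤ n) : lowZero pp m x :=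
  fun C hC => h C (lt_of_lt_of_le hC hmn)

lemma lowZero_add {pp : PathAlgPresentation k Q P A} {n : ℕ} {x y : A}
    (hx : lowZero pp n x) (hy : lowZero pp n y) : lowZero pp n (x + y) := by
  intro C hC
  rw [map_add, Finsupp.add_apply, hx C hC, hy C hC, add_zero]

lemma lowZero_smul {pp : PathAlgPresentation k Q P A} {n : ℕ} {x : A} (c : k)
    (hx : lowZero pp n x) : lowZero pp n (c • x) := by
  intro C hC
  rw [map_smul, Finsupp.smul_apply, hx C hC, smul_zero]

lemma lowZero_mul {pp : PathAlgPresentation k Q P A} {m n : ℕ} {x y : A}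
    (hx : lowZero pp m x) (hy : lowZero pp n y) : lowZero pp (m + n) (x * y) := by
  intro E hE
  rw [repr_mul, Finsupp.sum]
  apply Finset.sum_eq_zero
  intro C hC
  rw [Finsupp.sum]
  apply Finset.sum_eq_zero
  intro D hD
  split_ifs with h
  · exfalso
    have hC' := Finsupp.mem_support_iff.mp hC
    have hD' := Finsupp.mem_support_iff.mp hD
    have hlenC : m ≤ thLen Q C.1 := not_lt.mp fun hlt => hC' (hx C hlt)
    have hlenD : n ≤ thLen Q D.1 := not_lt.mp fun hlt => hD' (hy D hlt)
    have := pcomp_len h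
    omega
  · rw [mul_zero, mul_zero]

/-- Every nonzero path has length `< N` where `N` is the gentleness bound. -/
lemma exists_bound (hg : IsGentle Q P) :
    ∃ N : ℕ, 0 < N ∧ ∀ C : Gam Q P, thLen Q C.1 < N := by
  obtain ⟨N, hN⟩ := hg.bounded
  have hNpos : 0 < N := by
    rcases Nat.eq_zero_or_pos N with h0 | h
    · obtain ⟨l₁, a, b, l₂, hdec, -⟩ := hN [] List.isChain_nil (by simp [h0])
      exact absurd hdec.symm (by simp)
    · exact h
  refine ⟨N, hNpos, ?_⟩
  · intro C
    rcases C with ⟨p, hp⟩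
    cases p with
    | inl v =>
      simpa only [thLen] using hNpos
    | inr l =>
      simp only [thLen]
      by_contra hlen
      push_neg at hlen
      obtain ⟨-, hch⟩ := hp
      have hch' : List.Chain' (fun a b => Q.tgt a = Q.src b) (l.take N) :=
        (hch.take N).imp (fun {a b} h => h.1)
      obtain ⟨l₁, a, b, l₂, hdec, hP⟩ := hN (l.take N) hch' (by
        rw [List.length_take]; omega)
      have hinfix : [a, b] <:+: l.take N := ⟨l₁, l₂, by rw [hdec]; simp⟩
      have hpp : permPair Q P a b := by
        have h2 := (hch.take N).infix hinfix
        rw [List.isChain_cons_cons] at h2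
        exact h2.1
      exact hpp.2 hP

lemma eq_zero_of_lowZero {pp : PathAlgPresentation k Q P A} (hg : IsGentle Q P) {n : ℕ} {x : A}
    (hx : lowZero pp n x) (hn : ∀ C : Gam Q P, thLen Q C.1 < n) : x = 0 := by
  have : pp.bas.repr x = 0 := by
    ext C
    exact hx C (hn C)
  have := congrArg pp.bas.repr.symm this
  simpa using this

lemma bas_mul_e (pp : PathAlgPresentation k Q P A) (Cg : Gam Q P) (v : Q.V)
    (h : thStart Q Cg.1 = some v) : pp.bas Cg * pp.e v = pp.bas Cg := by
  rw [PathAlgPresentation.e, pp.mul_bas]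
  rcases Cg with ⟨p, hp⟩
  cases p with
  | inl u =>
    have hu : u = v := Option.some.inj h
    subst hu
    show (pcomp Q (Sum.inl u) (Sum.inl u)).elim 0 (basImg pp.bas) = pp.bas ⟨Sum.inl u, hp⟩
    have hpc : pcomp Q (Sum.inl u) (Sum.inl u) = some (Sum.inl u) := by simp [pcomp]; rfl
    rw [hpc]
    exact dif_pos hp
  | inr l =>
    simp only [pcomp, trivGam]
    rw [if_pos h]
    simp only [Option.elim, basImg, dif_pos hp]

lemma e_mul_bas (pp : PathAlgPresentation k Q P A) (Cg : Gam Q P) (w : Q.V)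
    (h : thEnd Q Cg.1 = some w) : pp.e w * pp.bas Cg = pp.bas Cg := by
  rw [PathAlgPresentation.e, pp.mul_bas]
  rcases Cg with ⟨p, hp⟩
  cases p with
  | inl u =>
    have hu : w = u := (Option.some.inj h).symm
    subst hu
    show (pcomp Q (Sum.inl w) (Sum.inl w)).elim 0 (basImg pp.bas) = pp.bas ⟨Sum.inl w, hp⟩
    have hpc : pcomp Q (Sum.inl w) (Sum.inl w) = some (Sum.inl w) := by simp [pcomp]; rfl
    rw [hpc]
    exact dif_pos hp
  | inr l =>
    simp only [pcomp, trivGam]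
    rw [if_pos h]
    simp only [Option.elim, basImg, dif_pos hp]

lemma repr_zero_of_thStart (pp : PathAlgPresentation k Q P A) {x : A} {v : Q.V}
    (hx : x * pp.e v = x) {C : Gam Q P} (hC : thStart Q C.1 ≠ some v) :
    pp.bas.repr x C = 0 := by
  conv_lhs => rw [← hx]
  rw [PathAlgPresentation.e, repr_mul_left, Finsupp.sum]
  apply Finset.sum_eq_zero
  intro D hD
  rw [repr_bas_mul_bas, if_neg, mul_zero]
  intro hpc
  obtain ⟨hr, hs⟩ := pcomp_inl_right (p := D.1) (v := v) hpc
  exact hC (by rw [hr]; exact hs)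

lemma repr_zero_of_thEnd (pp : PathAlgPresentation k Q P A) {x : A} {w : Q.V}
    (hx : pp.e w * x = x) {C : Gam Q P} (hC : thEnd Q C.1 ≠ some w) :
    pp.bas.repr x C = 0 := by
  conv_lhs => rw [← hx]
  rw [PathAlgPresentation.e, repr_mul_right, Finsupp.sum]
  apply Finset.sum_eq_zero
  intro D hD
  rw [repr_bas_mul_bas, if_neg, mul_zero]
  intro hpc
  obtain ⟨hr, hs⟩ := pcomp_inl_left (q := D.1) (w := w) hpc
  exact hC (by rw [hr]; exact hs)

end LOW
section ARR
variable {k : Type} [Field k] {Q : Quiv} {P : Rels Q} {A : Type} [Ring A] [Algebra k A]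

/-- The coefficient of the arrow `c` in the image of the arrow `d`. -/
noncomputable def arrCoeff (pp : PathAlgPresentation k Q P A) (f : A ≃ₐ[k] A) (c d : Q.A) : k :=
  pp.coeff f (arrGam Q P c) (arrGam Q P d)

lemma arr_mul_e (pp : PathAlgPresentation k Q P A) {f : A ≃ₐ[k] A} (hf : pp.MemAutL f)
    (a : Q.A) : f (pp.bas (arrGam Q P a)) * pp.e (Q.src a) = f (pp.bas (arrGam Q P a)) := by
  conv_lhs => rw [← hf (Q.src a)]
  rw [← map_mul, bas_mul_e pp (arrGam Q P a) (Q.src a) rfl]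

lemma e_mul_arr (pp : PathAlgPresentation k Q P A) {f : A ≃ₐ[k] A} (hf : pp.MemAutL f)
    (a : Q.A) : pp.e (Q.tgt a) * f (pp.bas (arrGam Q P a)) = f (pp.bas (arrGam Q P a)) := by
  conv_lhs => rw [← hf (Q.tgt a)]
  rw [← map_mul, e_mul_bas pp (arrGam Q P a) (Q.tgt a) rfl]

lemma arr_support (pp : PathAlgPresentation k Q P A) {f : A ≃ₐ[k] A} (hf : pp.MemAutL f)
    (a : Q.A) {C : Gam Q P} (hC : pp.bas.repr (f (pp.bas (arrGam Q P a))) C ≠ 0) :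
    thStart Q C.1 = some (Q.src a) ∧ thEnd Q C.1 = some (Q.tgt a) := by
  constructor
  · by_contra hne; exact hC (repr_zero_of_thStart pp (arr_mul_e pp hf a) hne)
  · by_contra hne; exact hC (repr_zero_of_thEnd pp (e_mul_arr pp hf a) hne)

lemma bas_arr_lowZero_one (pp : PathAlgPresentation k Q P A) (a : Q.A) :
    lowZero pp 1 (pp.bas (arrGam Q P a)) := by
  intro C hC
  rw [pp.bas.repr_self, Finsupp.single_apply, if_neg]
  intro h
  rw [← h] at hC
  simp [arrGam, thLen] at hC

lemma bas_arr_pow_lowZero (pp : PathAlgPresentation k Q P A) (a : Q.A) :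
    ∀ m : ℕ, lowZero pp (m + 1) ((pp.bas (arrGam Q P a)) ^ (m + 1)) := by
  intro m
  induction m with
  | zero => rw [pow_one]; exact bas_arr_lowZero_one pp a
  | succ m ih =>
    rw [pow_succ]
    exact lowZero_mul ih (bas_arr_lowZero_one pp a)

lemma bas_arr_nilpotent (pp : PathAlgPresentation k Q P A) (hg : IsGentle Q P) (a : Q.A) :
    ∃ m : ℕ, (pp.bas (arrGam Q P a)) ^ (m + 1) = 0 := by
  obtain ⟨N, hNpos, hbd⟩ := exists_bound hg
  obtain ⟨m, rfl⟩ : ∃ m, N = m + 1 := ⟨N - 1, by omega⟩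
  exact ⟨m, eq_zero_of_lowZero hg (bas_arr_pow_lowZero pp a m) hbd⟩

lemma arr_image_triv (pp : PathAlgPresentation k Q P A) (hg : IsGentle Q P)
    {f : A ≃ₐ[k] A} (hf : pp.MemAutL f) (a : Q.A) (v : Q.V) :
    pp.bas.repr (f (pp.bas (arrGam Q P a))) (trivGam Q P v) = 0 := by
  by_contra hne
  obtain ⟨hs, he⟩ := arr_support pp hf a hne
  have hv1 : v = Q.src a := Option.some.inj hs
  have hv2 : v = Q.tgt a := Option.some.inj he
  set x := f (pp.bas (arrGam Q P a)) with hxdef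
  set lam := pp.bas.repr x (trivGam Q P v) with hlamdef
  have hxe : x * pp.e v = x := by rw [hv1]; exact arr_mul_e pp hf a
  have hex : pp.e v * x = x := by rw [hv2]; exact e_mul_arr pp hf a
  have hee : pp.e v * pp.e v = pp.e v := bas_mul_e pp (trivGam Q P v) v rfl
  set n := x - lam • pp.e v with hndef
  have hen : pp.e v * n = n := by
    rw [hndef, mul_sub, hex, mul_smul_comm, hee]
  have hne' : n * pp.e v = n := by
    rw [hndef, sub_mul, hxe, smul_mul_assoc, hee]
  have hreprev : ∀ u : Q.V, pp.bas.repr (pp.e v) (trivGam Q P u) =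
      if (trivGam Q P v : Gam Q P) = trivGam Q P u then 1 else 0 := by
    intro u
    rw [PathAlgPresentation.e, pp.bas.repr_self, Finsupp.single_apply]
  have hlow : lowZero pp 1 n := by
    intro C hC
    obtain ⟨u, hu⟩ := thLen_eq_zero C.2 (by omega)
    have hCu : C = trivGam Q P u := Subtype.ext hu
    rw [hCu, hndef, map_sub, Finsupp.sub_apply, map_smul, Finsupp.smul_apply]
    by_cases huv : u = v
    · subst huv
      rw [hreprev u, if_pos rfl, ← hlamdef]
      simp
    · have h1 : pp.bas.repr x (trivGam Q P u) = 0 := by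
        by_contra h1
        obtain ⟨hs', -⟩ := arr_support pp hf a h1
        exact huv ((Option.some.inj hs').trans hv1.symm)
      rw [h1, hreprev u, if_neg (fun hh => huv (congrArg (fun (z : Gam Q P) =>
        match z.1 with | Sum.inl w => w | Sum.inr _ => v) hh).symm)]
      simp
  have key : ∀ m : ℕ, ∃ y : A, x ^ (m + 1) = lam ^ (m + 1) • pp.e v + y ∧
      lowZero pp 1 y ∧ pp.e v * y = y ∧ y * pp.e v = y := by
    intro m
    induction m with
    | zero =>
      refine ⟨n, ?_, hlow, hen, hne'⟩
      rw [pow_one, pow_one, hndef]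
      abel
    | succ m ih =>
      obtain ⟨y, hy, hylow, hey, hye⟩ := ih
      refine ⟨lam ^ (m + 1) • n + lam • y + y * n, ?_, ?_, ?_, ?_⟩
      · have hxeq : x = lam • pp.e v + n := by rw [hndef]; abel
        rw [pow_succ, hy]
        conv_lhs => rw [hxeq]
        rw [add_mul, mul_add, mul_add]
        simp only [smul_mul_assoc, mul_smul_comm, smul_smul, hee, hen, hye]
        rw [← pow_succ']
        abel
      · refine lowZero_add (lowZero_add (lowZero_smul _ hlow) (lowZero_smul _ hylow)) ?_
        exact lowZero_mono (lowZero_mul hylow hlow) (by omega)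
      · rw [mul_add, mul_add, mul_smul_comm, hen, mul_smul_comm, hey, ← mul_assoc, hey]
      · rw [add_mul, add_mul, smul_mul_assoc, hne', smul_mul_assoc, hye, mul_assoc, hne']
  obtain ⟨m, hm0⟩ := bas_arr_nilpotent pp hg a
  obtain ⟨y, hy, hylow, -, -⟩ := key m
  have hx0 : x ^ (m + 1) = 0 := by
    rw [hxdef, ← map_pow, hm0, map_zero]
  rw [hx0] at hy
  have h0 := congrArg (fun z => pp.bas.repr z (trivGam Q P v)) hy
  simp only [map_zero, Finsupp.coe_zero, Pi.zero_apply, map_add, Finsupp.add_apply,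
    map_smul, Finsupp.smul_apply] at h0
  rw [hreprev v, if_pos rfl, hylow (trivGam Q P v) (by simp [trivGam, thLen])] at h0
  have hlam0 : lam ^ (m + 1) = 0 := by
    rw [smul_eq_mul, mul_one, add_zero] at h0
    exact h0.symm
  exact hne (pow_eq_zero_iff (Nat.succ_ne_zero m) |>.mp hlam0)

end ARR
section SPLIT
variable {k : Type} [Field k] {Q : Quiv} {P : Rels Q} {A : Type} [Ring A] [Algebra k A]

lemma gam_inr_of_pos {C : Gam Q P} {m : ℕ} (hm : 1 ≤ m) (h : m ≤ thLen Q C.1) :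
    ∃ lc : List Q.A, C.1 = Sum.inr lc ∧ lc.length = thLen Q C.1 := by
  rcases C with ⟨p, hp⟩
  cases p with
  | inl v => simp only [thLen] at h; omega
  | inr l => exact ⟨l, rfl, rfl⟩

lemma repr_mul_split (pp : PathAlgPresentation k Q P A) {m n : ℕ} (hm : 1 ≤ m) (hn : 1 ≤ n)
    {x y : A} (hx : lowZero pp m x) (hy : lowZero pp n y) {e : List Q.A}
    (he : pthOk Q P (Sum.inr e)) (hlen : e.length = n + m)
    (hd : pthOk Q P (Sum.inr (e.drop n))) (ht : pthOk Q P (Sum.inr (e.take n))) :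
    pp.bas.repr (x * y) ⟨Sum.inr e, he⟩ =
      pp.bas.repr x ⟨Sum.inr (e.drop n), hd⟩ * pp.bas.repr y ⟨Sum.inr (e.take n), ht⟩ := by
  set Cg : Gam Q P := ⟨Sum.inr (e.drop n), hd⟩ with hCg
  set Dg : Gam Q P := ⟨Sum.inr (e.take n), ht⟩ with hDg
  have key1 : ∀ C D : Gam Q P, pp.bas.repr x C ≠ 0 → pp.bas.repr y D ≠ 0 →
      pcomp Q C.1 D.1 = some (Sum.inr e) → C = Cg ∧ D = Dg := by
    intro C D hC hD hpc
    have hlc : m ≤ thLen Q C.1 := not_lt.mp fun hlt => hC (hx C hlt)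
    have hld : n ≤ thLen Q D.1 := not_lt.mp fun hlt => hD (hy D hlt)
    obtain ⟨lc, hlc1, hlc2⟩ := gam_inr_of_pos hm hlc
    obtain ⟨ld, hld1, hld2⟩ := gam_inr_of_pos hn hld
    rw [hlc1, hld1] at hpc
    simp only [pcomp, Option.some.injEq] at hpc
    have hpc' : ld ++ lc = e := Sum.inr.inj (Option.some.inj hpc)
    have hlene : ld.length + lc.length = e.length := by
      rw [← hpc']; simp
    have hlenc : lc.length = m := by omega
    have hlend : ld.length = n := by omega
    have htake : e.take n = ld := by
      rw [← hpc', List.take_left' hlend]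
    have hdrop : e.drop n = lc := by
      rw [← hpc', List.drop_left' hlend]
    constructor
    · apply Subtype.ext; rw [hlc1, hCg]; simp [hdrop]; rfl
    · apply Subtype.ext; rw [hld1, hDg]; simp [htake]; rfl
  have hpcg : pcomp Q Cg.1 Dg.1 = some (Sum.inr e) := by
    simp only [hCg, hDg, pcomp, Option.some.injEq]
    rw [List.take_append_drop]
    rfl
  rw [repr_mul pp x y ⟨Sum.inr e, he⟩, Finsupp.sum]
  have inner : ∀ C : Gam Q P, C ∈ (pp.bas.repr x).support →
      ((pp.bas.repr y).sum fun D d => pp.bas.repr x C *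
        (d * (if pcomp Q C.1 D.1 = some ((⟨Sum.inr e, he⟩ : Gam Q P) : Pth Q) then (1:k) else 0))) =
      if C = Cg then pp.bas.repr x C * pp.bas.repr y Dg else 0 := by
    intro C hCsup
    have hC : pp.bas.repr x C ≠ 0 := Finsupp.mem_support_iff.mp hCsup
    by_cases hCeq : C = Cg
    · rw [if_pos hCeq]
      rw [Finsupp.sum]
      rw [Finset.sum_eq_single Dg]
      · rw [if_pos (by rw [hCeq]; exact hpcg), mul_one]
      · intro D hDsup hDne
        rw [if_neg, mul_zero, mul_zero]
        intro hpc
        exact hDne (key1 C D hC (Finsupp.mem_support_iff.mp hDsup) hpc).2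
      · intro hDg
        rw [Finsupp.notMem_support_iff.mp hDg, zero_mul, mul_zero]
    · rw [if_neg hCeq, Finsupp.sum]
      apply Finset.sum_eq_zero
      intro D hDsup
      rw [if_neg, mul_zero, mul_zero]
      intro hpc
      exact hCeq (key1 C D hC (Finsupp.mem_support_iff.mp hDsup) hpc).1
  rw [Finset.sum_congr rfl inner]
  rw [Finset.sum_ite_eq' (pp.bas.repr x).support Cg
    (fun C => pp.bas.repr x C * pp.bas.repr y Dg)]
  by_cases hCgsup : Cg ∈ (pp.bas.repr x).support
  · rw [if_pos hCgsup]
  · rw [if_neg hCgsup, Finsupp.notMem_support_iff.mp hCgsup, zero_mul]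

lemma arr_f_lowZero (pp : PathAlgPresentation k Q P A) (hg : IsGentle Q P)
    {f : A ≃ₐ[k] A} (hf : pp.MemAutL f) (d : Q.A) :
    lowZero pp 1 (f (pp.bas (arrGam Q P d))) := by
  intro C hC
  obtain ⟨u, hu⟩ := thLen_eq_zero C.2 (by omega)
  rw [show C = trivGam Q P u from Subtype.ext hu]
  exact arr_image_triv pp hg hf d u

lemma main_ind (pp : PathAlgPresentation k Q P A) (hg : IsGentle Q P)
    {f : A ≃ₐ[k] A} (hf : pp.MemAutL f) :
    ∀ (l : List Q.A) (hok : pthOk Q P (Sum.inr l)),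
      lowZero pp l.length (f (pp.bas ⟨Sum.inr l, hok⟩)) ∧
      (∀ (m : List Q.A) (hm : pthOk Q P (Sum.inr m)), m.length = l.length →
        pp.bas.repr (f (pp.bas ⟨Sum.inr l, hok⟩)) ⟨Sum.inr m, hm⟩ =
          ((m.zip l).map fun pr => arrCoeff pp f pr.1 pr.2).prod) := by
  intro l
  induction l with
  | nil => intro hok; exact absurd rfl hok.1
  | cons d l' ih =>
    intro hok
    rcases eq_or_ne l' [] with rfl | hl'
    · constructor
      · intro C hC
        obtain ⟨u, hu⟩ := thLen_eq_zero C.2 (by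
          simp only [List.length_cons, List.length_nil] at hC; omega)
        rw [show C = trivGam Q P u from Subtype.ext hu,
          show (⟨Sum.inr [d], hok⟩ : Gam Q P) = arrGam Q P d from Subtype.ext rfl]
        exact arr_image_triv pp hg hf d u
      · intro m hm hlen
        obtain ⟨c, rfl⟩ := List.length_eq_one_iff.mp (by simpa using hlen)
        rw [show (⟨Sum.inr [d], hok⟩ : Gam Q P) = arrGam Q P d from Subtype.ext rfl,
          show (⟨Sum.inr [c], hm⟩ : Gam Q P) = arrGam Q P c from Subtype.ext rfl]
        simp [arrCoeff, PathAlgPresentation.coeff]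
    · have hok' : pthOk Q P (Sum.inr l') := ⟨hl', hok.2.tail⟩
      obtain ⟨ihlow, ihcoef⟩ := ih hok'
      have hl'pos : 1 ≤ l'.length := List.length_pos_iff.mpr hl'
      have hsplit : pp.bas ⟨Sum.inr l', hok'⟩ * pp.bas (arrGam Q P d) =
          pp.bas ⟨Sum.inr (d :: l'), hok⟩ := by
        rw [pp.mul_bas ⟨Sum.inr l', hok'⟩ (arrGam Q P d)]
        show basImg pp.bas (Sum.inr ([d] ++ l')) = _
        rw [List.singleton_append]
        exact dif_pos hok
      have hmap : f (pp.bas ⟨Sum.inr (d :: l'), hok⟩) =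
          f (pp.bas ⟨Sum.inr l', hok'⟩) * f (pp.bas (arrGam Q P d)) := by
        rw [← map_mul, hsplit]
      constructor
      · rw [hmap]
        have := lowZero_mul ihlow (arr_f_lowZero pp hg hf d)
        intro C hC
        exact this C (by simpa using hC)
      · intro m hm hlen
        cases m with
        | nil => exact absurd hlen (by simp)
        | cons c m' =>
          have hlen' : m'.length = l'.length := by simpa using hlen
          have hdrop : pthOk Q P (Sum.inr m') :=
            ⟨by intro h0; rw [h0] at hlen'; simp at hlen'; omega, hm.2.tail⟩
          have htake : pthOk Q P (Sum.inr [c]) := ⟨by simp, List.isChain_singleton c⟩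
          rw [hmap]
          rw [repr_mul_split pp hl'pos (le_refl 1) ihlow (arr_f_lowZero pp hg hf d) hm
            (by simp [hlen']; omega) hdrop htake]
          rw [show (⟨Sum.inr ((c :: m').drop 1), hdrop⟩ : Gam Q P) = ⟨Sum.inr m', hdrop⟩ from
            Subtype.ext rfl]
          rw [ihcoef m' hdrop hlen']
          rw [show (⟨Sum.inr ((c :: m').take 1), htake⟩ : Gam Q P) = arrGam Q P c from
            Subtype.ext rfl]
          have : pp.bas.repr (f (pp.bas (arrGam Q P d))) (arrGam Q P c) = arrCoeff pp f c d := rfl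
          rw [this]
          simp only [List.zip_cons_cons, List.map_cons, List.prod_cons]
          ring
end SPLIT
section COMB
variable {k : Type} [Field k] {Q : Quiv} {P : Rels Q} {A : Type} [Ring A] [Algebra k A]

lemma two_of_card_le_two {α : Type} [Fintype α] (h : Fintype.card α ≤ 2) {x y : α}
    (hxy : x ≠ y) (z : α) : z = x ∨ z = y := by
  by_contra hz
  push_neg at hz
  have h3 : 2 < Fintype.card α := Fintype.two_lt_card_iff.mpr ⟨z, x, y, hz.1, hz.2, hxy⟩
  omega

lemma src_mem_pair (hg : IsGentle Q P) {a b c : Q.A} (hab : a ≠ b) (hs : Q.src a = Q.src b)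
    (hc : Q.src c = Q.src a) : c = a ∨ c = b := by
  have h2 := hg.src_le_two (Q.src a)
  have h := two_of_card_le_two h2 (x := (⟨a, rfl⟩ : {a' : Q.A // Q.src a' = Q.src a}))
    (y := ⟨b, hs.symm⟩) (fun hh => hab (congrArg Subtype.val hh)) ⟨c, hc⟩
  rcases h with h | h
  · exact Or.inl (congrArg Subtype.val h)
  · exact Or.inr (congrArg Subtype.val h)

lemma tgt_mem_pair (hg : IsGentle Q P) {a b c : Q.A} (hab : a ≠ b) (ht : Q.tgt a = Q.tgt b)
    (hc : Q.tgt c = Q.tgt a) : c = a ∨ c = b := by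
  have h2 := hg.tgt_le_two (Q.tgt a)
  have h := two_of_card_le_two h2 (x := (⟨a, rfl⟩ : {a' : Q.A // Q.tgt a' = Q.tgt a}))
    (y := ⟨b, ht.symm⟩) (fun hh => hab (congrArg Subtype.val hh)) ⟨c, hc⟩
  rcases h with h | h
  · exact Or.inl (congrArg Subtype.val h)
  · exact Or.inr (congrArg Subtype.val h)

lemma chain_of_all {g : ℕ → Q.A} {R : Q.A → Q.A → Prop} {M : ℕ}
    (h : ∀ i, i < M → R (g i) (g (i + 1))) :
    List.Chain' R ((List.range (M + 1)).map g) := by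
  rw [List.Chain', List.isChain_map]
  exact (List.isChain_range_succ _ M).mpr h

lemma no_rel_decomp {l : List Q.A} (hch : List.Chain' (fun a b => ¬ P a b) l)
    {l₁ l₂ : List Q.A} {p q : Q.A} (h : l = l₁ ++ p :: q :: l₂) : ¬ P p q := by
  have h2 : List.Chain' (fun a b => ¬ P a b) [p, q] :=
    hch.infix ⟨l₁, l₂, by rw [h]; simp⟩
  rw [List.Chain', List.isChain_cons_cons] at h2
  exact h2.1

lemma no_parallel_loops (hg : IsGentle Q P) {a b : Q.A} (hab : a ≠ b)
    (hs : Q.src a = Q.src b) (ht : Q.tgt a = Q.tgt b) : Q.src a ≠ Q.tgt a := by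
  intro hloop
  obtain ⟨N, hN⟩ := hg.bounded
  have hNpos : 0 < N := by
    rcases Nat.eq_zero_or_pos N with h0 | h
    · obtain ⟨l₁, p, q, l₂, hdec, -⟩ := hN [] List.isChain_nil (by simp [h0])
      exact absurd hdec.symm (by simp)
    · exact h
  obtain ⟨M, rfl⟩ : ∃ M, N = M + 1 := ⟨N - 1, by omega⟩
  have hta : Q.tgt a = Q.src a := hloop.symm
  have hsb : Q.src b = Q.src a := hs.symm
  have htb : Q.tgt b = Q.src a := by rw [← ht]; exact hta
  have contra : ∀ g : ℕ → Q.A, (∀ i, g i = a ∨ g i = b) →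
      (∀ i, i < M → ¬ P (g i) (g (i + 1))) → False := by
    intro g hgab hgnr
    have htg : ∀ i, Q.tgt (g i) = Q.src a := by
      intro i; rcases hgab i with h | h <;> rw [h]
      · exact hta
      · exact htb
    have hsg : ∀ i, Q.src (g i) = Q.src a := by
      intro i; rcases hgab i with h | h <;> rw [h]
      · exact hsb
    have hch : List.Chain' (fun x y => Q.tgt x = Q.src y) ((List.range (M + 1)).map g) :=
      chain_of_all (fun i _ => by rw [htg i, hsg (i + 1)])
    obtain ⟨l₁, p, q, l₂, hdec, hP⟩ := hN _ hch (by simp)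
    exact no_rel_decomp (chain_of_all hgnr) hdec hP
  by_cases hPaa : P a a
  · by_cases hPbb : P b b
    · have hnab : ¬ P a b := fun h => hab (hg.rel_succ_unique a a b hPaa h)
      have hnba : ¬ P b a := fun h => hab ((hg.rel_succ_unique b b a hPbb h).symm)
      apply contra (fun i => if i % 2 = 0 then a else b)
      · intro i
        split_ifs
        · exact Or.inl rfl
        · exact Or.inr rfl
      · intro i hi
        rcases Nat.mod_two_eq_zero_or_one i with h1 | h1
        · have h2 : (i + 1) % 2 = 1 := by omega
          simp only [h1, h2, if_pos rfl]
          simpa using hnab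
        · have h2 : (i + 1) % 2 = 0 := by omega
          simp only [h1, h2, if_pos rfl]
          simpa using hnba
    · exact contra (fun _ => b) (fun _ => Or.inr rfl) (fun i _ => hPbb)
  · exact contra (fun _ => a) (fun _ => Or.inl rfl) (fun i _ => hPaa)

lemma exists_witness (hg : IsGentle Q P) (hc : Connected Q) (hnk : ¬ IsKronecker Q)
    {a b : Q.A} (hab : a ≠ b) (hs : Q.src a = Q.src b) (ht : Q.tgt a = Q.tgt b) :
    ∃ γ : Q.A, Q.tgt γ = Q.src a ∨ Q.src γ = Q.tgt a := by
  by_contra hno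
  push_neg at hno
  have hvw : Q.src a ≠ Q.tgt a := no_parallel_loops hg hab hs ht
  have hvert : ∀ u : Q.V, u = Q.src a ∨ u = Q.tgt a := by
    intro u
    have hr := hc.2 (Q.src a) u
    induction hr with
    | refl => exact Or.inl rfl
    | tail hst hedge ih =>
      rename_i x y
      obtain ⟨γ, hγ⟩ := hedge
      rcases ih with hx | hx
      · rcases hγ with ⟨h1, h2⟩ | ⟨h1, h2⟩
        · rw [hx] at h1
          rcases src_mem_pair hg hab hs h1 with rfl | rfl
          · exact Or.inr h2.symm
          · exact Or.inr (by rw [← h2, ← ht])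
        · rw [hx] at h2
          exact absurd h2 (hno γ).1
      · rcases hγ with ⟨h1, h2⟩ | ⟨h1, h2⟩
        · rw [hx] at h1
          exact absurd h1 (hno γ).2
        · rw [hx] at h2
          rcases tgt_mem_pair hg hab ht h2 with rfl | rfl
          · exact Or.inl h1.symm
          · exact Or.inl (by rw [← h1, ← hs])
  have harr : ∀ c : Q.A, c = a ∨ c = b := by
    intro c
    rcases hvert (Q.src c) with hcv | hcw
    · exact src_mem_pair hg hab hs hcv
    · exact absurd hcw (hno c).2
  apply hnk
  refine ⟨Q.src a, Q.tgt a, a, b, hvw, hab, hvert, harr, ?_⟩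
  intro c
  rcases harr c with rfl | rfl
  · exact ⟨rfl, rfl⟩
  · exact ⟨hs.symm, ht.symm⟩

end COMB
section ZDIR
variable {k : Type} [Field k] {Q : Quiv} {P : Rels Q} {A : Type} [Ring A] [Algebra k A]

lemma bas_pair_zero (pp : PathAlgPresentation k Q P A) {s t : Q.A} (hrel : P s t) :
    pp.bas (arrGam Q P t) * pp.bas (arrGam Q P s) = 0 := by
  rw [pp.mul_bas]
  show basImg pp.bas (Sum.inr ([s] ++ [t])) = 0
  rw [show [s] ++ [t] = [s, t] from rfl]
  exact dif_neg (fun hok => by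
    have h2 := hok.2
    rw [List.Chain', List.isChain_cons_cons] at h2
    exact h2.1.2 hrel)

lemma coeff_prod_pair (pp : PathAlgPresentation k Q P A) (hg : IsGentle Q P)
    {f : A ≃ₐ[k] A} (hfL : pp.MemAutL f) (s t : Q.A) {u v : Q.A}
    (hok2 : pthOk Q P (Sum.inr [u, v])) :
    pp.bas.repr (f (pp.bas (arrGam Q P t)) * f (pp.bas (arrGam Q P s)))
        ⟨Sum.inr [u, v], hok2⟩ =
      arrCoeff pp f v t * arrCoeff pp f u s := by
  have hd : pthOk Q P (Sum.inr ([u, v].drop 1)) := ⟨by simp, by simp [List.Chain']⟩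
  have ht2 : pthOk Q P (Sum.inr ([u, v].take 1)) := ⟨by simp, by simp [List.Chain']⟩
  rw [repr_mul_split pp (le_refl 1) (le_refl 1) (arr_f_lowZero pp hg hfL t)
    (arr_f_lowZero pp hg hfL s) hok2 (by simp) hd ht2]
  rw [show (⟨Sum.inr ([u, v].drop 1), hd⟩ : Gam Q P) = arrGam Q P v from Subtype.ext rfl,
    show (⟨Sum.inr ([u, v].take 1), ht2⟩ : Gam Q P) = arrGam Q P u from Subtype.ext rfl]
  rfl

lemma zero_dir (pp : PathAlgPresentation k Q P A) (hg : IsGentle Q P) (hc : Connected Q)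
    (hnk : ¬ IsKronecker Q) {a b : Q.A} (hab : a ≠ b) (hs : Q.src a = Q.src b)
    (ht : Q.tgt a = Q.tgt b) :
    (∀ f : A ≃ₐ[k] A, pp.MemAutStar f → arrCoeff pp f a b = 0) ∨
    (∀ f : A ≃ₐ[k] A, pp.MemAutStar f → arrCoeff pp f b a = 0) := by
  obtain ⟨γ, hγ | hγ⟩ := exists_witness hg hc hnk hab hs ht
  · -- a witness arrow ending at the common source
    have hone : P γ a ∨ P γ b := by
      by_contra hcon
      push_neg at hcon
      exact hab (hg.nonrel_succ_unique γ a b hγ.symm (hs.symm.trans hγ.symm) hcon.1 hcon.2)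
    rcases Classical.em (P γ a) with hPa | hPa
    · have hPb : ¬ P γ b := fun h => hab (hg.rel_succ_unique γ a b hPa h)
      right
      intro f hf
      have hok2 : pthOk Q P (Sum.inr [γ, b]) :=
        ⟨by simp, by rw [List.Chain', List.isChain_cons_cons]
                     exact ⟨⟨hγ.trans hs, hPb⟩, List.isChain_singleton b⟩⟩
      have h0 : f (pp.bas (arrGam Q P a)) * f (pp.bas (arrGam Q P γ)) = 0 := by
        rw [← map_mul, bas_pair_zero pp hPa, map_zero]
      have h1 := coeff_prod_pair pp hg hf.1 γ a hok2
      rw [h0] at h1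
      simp only [map_zero, Finsupp.coe_zero, Pi.zero_apply] at h1
      rcases mul_eq_zero.mp h1.symm with h | h
      · exact h
      · exact absurd h (hf.2 γ)
    · have hPb : P γ b := hone.resolve_left hPa
      left
      intro f hf
      have hok2 : pthOk Q P (Sum.inr [γ, a]) :=
        ⟨by simp, by rw [List.Chain', List.isChain_cons_cons]
                     exact ⟨⟨hγ, hPa⟩, List.isChain_singleton a⟩⟩
      have h0 : f (pp.bas (arrGam Q P b)) * f (pp.bas (arrGam Q P γ)) = 0 := by
        rw [← map_mul, bas_pair_zero pp hPb, map_zero]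
      have h1 := coeff_prod_pair pp hg hf.1 γ b hok2
      rw [h0] at h1
      simp only [map_zero, Finsupp.coe_zero, Pi.zero_apply] at h1
      rcases mul_eq_zero.mp h1.symm with h | h
      · exact h
      · exact absurd h (hf.2 γ)
  · -- a witness arrow starting at the common target
    have hone : P a γ ∨ P b γ := by
      by_contra hcon
      push_neg at hcon
      exact hab (hg.nonrel_pred_unique γ a b hγ.symm (ht.symm.trans hγ.symm) hcon.1 hcon.2)
    rcases Classical.em (P a γ) with hPa | hPa
    · have hPb : ¬ P b γ := fun h => hab (hg.rel_pred_unique γ a b hPa h)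
      right
      intro f hf
      have hok2 : pthOk Q P (Sum.inr [b, γ]) :=
        ⟨by simp, by rw [List.Chain', List.isChain_cons_cons]
                     exact ⟨⟨ht.symm.trans hγ.symm, hPb⟩, List.isChain_singleton γ⟩⟩
      have h0 : f (pp.bas (arrGam Q P γ)) * f (pp.bas (arrGam Q P a)) = 0 := by
        rw [← map_mul, bas_pair_zero pp hPa, map_zero]
      have h1 := coeff_prod_pair pp hg hf.1 a γ hok2
      rw [h0] at h1
      simp only [map_zero, Finsupp.coe_zero, Pi.zero_apply] at h1
      rcases mul_eq_zero.mp h1.symm with h | h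
      · exact absurd h (hf.2 γ)
      · exact h
    · have hPb : P b γ := hone.resolve_left hPa
      have hPa' : ¬ P a γ := hPa
      left
      intro f hf
      have hok2 : pthOk Q P (Sum.inr [a, γ]) :=
        ⟨by simp, by rw [List.Chain', List.isChain_cons_cons]
                     exact ⟨⟨hγ.symm, hPa'⟩, List.isChain_singleton γ⟩⟩
      have h0 : f (pp.bas (arrGam Q P γ)) * f (pp.bas (arrGam Q P b)) = 0 := by
        rw [← map_mul, bas_pair_zero pp hPb, map_zero]
      have h1 := coeff_prod_pair pp hg hf.1 b γ hok2
      rw [h0] at h1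
      simp only [map_zero, Finsupp.coe_zero, Pi.zero_apply] at h1
      rcases mul_eq_zero.mp h1.symm with h | h
      · exact absurd h (hf.2 γ)
      · exact h
end ZDIR
section FINAL
variable {k : Type} [Field k] {Q : Quiv} {P : Rels Q} {A : Type} [Ring A] [Algebra k A]

lemma arrCoeff_parallel (pp : PathAlgPresentation k Q P A) {f : A ≃ₐ[k] A}
    (hfL : pp.MemAutL f) {c d : Q.A} (h : arrCoeff pp f c d ≠ 0) :
    Q.src c = Q.src d ∧ Q.tgt c = Q.tgt d := by
  have h2 := arr_support pp hfL d (C := arrGam Q P c) h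
  exact ⟨Option.some.inj h2.1, Option.some.inj h2.2⟩

lemma lex_le_of_forall₂ {α : Type} [LinearOrder α] {l₁ l₂ : List α}
    (h : List.Forall₂ (· ≤ ·) l₁ l₂) : l₁ ≤ l₂ := by
  induction h with
  | nil => exact le_refl _
  | @cons a b l l' h₁ h₂ ih =>
    rcases lt_or_eq_of_le h₁ with h | rfl
    · exact le_of_lt (List.Lex.rel h)
    · rcases lt_or_eq_of_le ih with h | rfl
      · exact le_of_lt (List.Lex.cons h)
      · exact le_refl _

/-- The list of arrows underlying an element of `Γ≥1`. -/
def listOf (C : {C : Gam Q P // 1 ≤ thLen Q C.1}) : List Q.A :=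
  Sum.elim (fun _ => ([] : List Q.A)) id C.1.1

lemma listOf_spec (C : {C : Gam Q P // 1 ≤ thLen Q C.1}) :
    C.1.1 = Sum.inr (listOf C) := by
  rcases hC : C.1.1 with v | l
  · exfalso
    have h2 := C.2
    rw [hC] at h2
    simp [thLen] at h2
  · simp [listOf, hC]; rfl

lemma listOf_ok (C : {C : Gam Q P // 1 ≤ thLen Q C.1}) :
    pthOk Q P (Sum.inr (listOf C)) := by
  rw [← listOf_spec C]; exact C.1.2

end FINAL

/-- There is a total order on `Γ≥1` such that `C < D` implies `f_C(D) = 0` for every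
`f ∈ Aut₊^l(A)`. -/
theorem exists_total_order
    (k : Type) [Field k] [IsAlgClosed k] (Q : Quiv) (P : Rels Q)
    (A : Type) [Ring A] [Algebra k A]
    (pp : PathAlgPresentation k Q P A) (hg : IsGentle Q P)
    (hc : Connected Q) (hnk : ¬ IsKronecker Q) :
    ∃ inst : LinearOrder {C : Gam Q P // 1 ≤ thLen Q C.1},
      ∀ f : A ≃ₐ[k] A, pp.MemAutStar f →
        ∀ C D : {C : Gam Q P // 1 ≤ thLen Q C.1},
          (letI := inst; C < D) → pp.coeff f C.1 D.1 = 0 := by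
  classical
  set Z : Q.A → Q.A → Prop := fun x y =>
    ∀ f : A ≃ₐ[k] A, pp.MemAutStar f → arrCoeff pp f x y = 0 with hZdef
  set ιA : Q.A → ℕ := fun a => ((Fintype.equivFin Q.A) a : ℕ) with hιAdef
  have hιA : Function.Injective ιA := by
    intro x y h
    exact (Fintype.equivFin Q.A).injective (Fin.ext h)
  set ιV : Q.V → ℕ := fun v => ((Fintype.equivFin Q.V) v : ℕ) with hιVdef
  set big : Q.A → Bool := fun a => decide (∃ b : Q.A, b ≠ a ∧ Q.src b = Q.src a ∧
    Q.tgt b = Q.tgt a ∧ Z b a ∧ (¬ Z a b ∨ ιA b < ιA a)) with hbigdef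
  set κ : Q.A → Lex (ℕ × Lex (ℕ × Lex (Bool × ℕ))) := fun a =>
    toLex (ιV (Q.src a), toLex (ιV (Q.tgt a), toLex (big a, ιA a))) with hκdef
  have hκinj : Function.Injective κ := by
    intro x y h
    apply hιA
    exact congrArg (fun z => (ofLex (ofLex (ofLex z).2).2).2) h
  have hkey : ∀ x y : Q.A, x ≠ y → Q.src x = Q.src y → Q.tgt x = Q.tgt y →
      κ x < κ y → Z x y := by
    intro x y hxy hsxy htxy hlt
    rcases zero_dir pp hg hc hnk hxy hsxy htxy with hZ | hZ
    · exact hZ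
    by_cases hZxy : Z x y
    · exact hZxy
    exfalso
    have hbx : big x = true := by
      rw [hbigdef]
      simp only [decide_eq_true_eq]
      exact ⟨y, Ne.symm hxy, hsxy.symm, htxy.symm, hZ, Or.inl hZxy⟩
    have hby : big y = false := by
      rw [hbigdef]
      simp only [decide_eq_false_iff_not]
      rintro ⟨b, hb1, hb2, hb3, hb4, -⟩
      have hb : b = x ∨ b = y := src_mem_pair hg hxy hsxy (hb2.trans hsxy.symm)
      rcases hb with rfl | rfl
      · exact hZxy hb4
      · exact hb1 rfl
    rw [hκdef] at hlt
    simp only [hsxy, htxy] at hlt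
    rw [Prod.Lex.lt_iff] at hlt
    rcases hlt with h | ⟨-, h⟩
    · exact absurd h (lt_irrefl _)
    rw [Prod.Lex.lt_iff] at h
    rcases h with h | ⟨-, h⟩
    · exact absurd h (lt_irrefl _)
    rw [Prod.Lex.lt_iff] at h
    rw [hbx, hby] at h
    simp at h
    exact absurd h (by decide)
  set Φ : {C : Gam Q P // 1 ≤ thLen Q C.1} →
      Lex (ℕ × List (Lex (ℕ × Lex (ℕ × Lex (Bool × ℕ))))) :=
    fun C => toLex ((listOf C).length, (listOf C).map κ) with hΦdef
  have hΦinj : Function.Injective Φ := by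
    intro C D h
    have h2 : (listOf C).map κ = (listOf D).map κ :=
      congrArg (fun z => (ofLex z).2) h
    have h3 : listOf C = listOf D := List.map_injective_iff.mpr hκinj h2
    apply Subtype.ext
    apply Subtype.ext
    rw [listOf_spec C, listOf_spec D, h3]
  refine ⟨LinearOrder.lift' Φ hΦinj, ?_⟩
  intro f hf C D hCD
  have hΦlt : Φ C < Φ D := hCD
  rw [hΦdef] at hΦlt
  rw [Prod.Lex.lt_iff] at hΦlt
  have hgoal : pp.coeff f C.1 D.1 =
      pp.bas.repr (f (pp.bas ⟨Sum.inr (listOf D), listOf_ok D⟩)) ⟨Sum.inr (listOf C), listOf_ok C⟩ := by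
    have hDq : D.1 = (⟨Sum.inr (listOf D), listOf_ok D⟩ : Gam Q P) := Subtype.ext (listOf_spec D)
    have hCq : C.1 = (⟨Sum.inr (listOf C), listOf_ok C⟩ : Gam Q P) := Subtype.ext (listOf_spec C)
    rw [PathAlgPresentation.coeff, hDq, hCq]
  rcases hΦlt with hlen | ⟨hlen, hlex⟩
  · rw [hgoal]
    exact (main_ind pp hg hf.1 (listOf D) (listOf_ok D)).1 ⟨Sum.inr (listOf C), listOf_ok C⟩
      (by simpa [thLen] using hlen)
  · by_contra hne0
    have hlen' : (listOf C).length = (listOf D).length := hlen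
    have hcoef := (main_ind pp hg hf.1 (listOf D) (listOf_ok D)).2 (listOf C) (listOf_ok C) hlen'
    rw [hgoal, hcoef] at hne0
    have hfac : ∀ i (h1 : i < (listOf C).length) (h2 : i < (listOf D).length),
        arrCoeff pp f ((listOf C)[i]) ((listOf D)[i]) ≠ 0 := by
      intro i h1 h2 h0
      apply hne0
      apply List.prod_eq_zero
      rw [List.mem_map]
      refine ⟨((listOf C)[i], (listOf D)[i]), ?_, h0⟩
      have hzlen : i < ((listOf C).zip (listOf D)).length := by
        rw [List.length_zip]; omega
      have hmem : ((listOf C).zip (listOf D))[i] ∈ (listOf C).zip (listOf D) :=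
        List.getElem_mem hzlen
      rw [List.getElem_zip] at hmem
      exact hmem
    have hpt : List.Forall₂ (· ≤ ·) ((listOf D).map κ) ((listOf C).map κ) := by
      rw [List.forall₂_iff_get]
      constructor
      · simp [hlen']
      · intro i h1 h2
        simp only [List.get_eq_getElem, List.getElem_map]
        have h1' : i < (listOf D).length := by simpa using h1
        have h2' : i < (listOf C).length := by simpa using h2
        have hne := hfac i h2' h1'
        have hpar := arrCoeff_parallel pp hf.1 hne
        rcases eq_or_ne ((listOf C)[i]'h2') ((listOf D)[i]'h1') with heq | hcd
        · rw [heq]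
        · by_contra hltκ
          push_neg at hltκ
          exact hne (hkey _ _ hcd hpar.1 hpar.2 hltκ f hf)
    have hle := lex_le_of_forall₂ hpt
    exact absurd hlex (not_lt.mpr hle)

end GentlePaper
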